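/- arXiv:1308.3354 — 2 statements merged into one kernel-verified Lean document; each statement's English description precedes it below -/
import Mathlib

section
/- In the coupon-collector process with m coupon types, if X is the number of rounds needed to collect m₀ specified uncollected coupon types (coupons drawn uniformly and independently each round), then for every ε > 0, P(X < (1-ε)(m-1)·ln m) ≤ exp(-m^(-1+ε)·m₀). -/
open MeasureTheory ProbabilityTheory Finset

/-- Bernoulli-type inequality: `u^(s+1) + (s+1)·u^s·d ≤ (u+d)^(s+1)`. -/
lemma bern_aux (u d : ℝ) (hu : 0 ≤ u) (hd : 0 ≤ d) (s : ℕ) :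
    u ^ (s+1) + (s+1) * u ^ s * d ≤ (u + d) ^ (s+1) := by
  induction s with
  | zero => simp
  | succ s ih =>
    have h2 : (u + d) * (u ^ (s+1) + ((s:ℝ)+1) * u ^ s * d) ≤ (u + d) * (u + d) ^ (s+1) :=
      mul_le_mul_of_nonneg_left ih (by linarith)
    have hd2 : 0 ≤ ((s:ℝ)+1) * u ^ s * d ^ 2 := by positivity
    have expand : (u + d) * (u ^ (s+1) + ((s:ℝ)+1) * u ^ s * d)
        = u ^ (s+1+1) + ((s:ℝ)+1+1) * u ^ (s+1) * d + ((s:ℝ)+1) * u ^ s * d ^ 2 := by ring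
    have hex2 : (u+d) ^ (s+1+1) = (u+d) * (u+d) ^ (s+1) := by ring
    push_cast
    nlinarith [h2, hd2, expand, hex2]

section Main

variable {Ω : Type*} [MeasurableSpace Ω] (μ : Measure Ω) [IsProbabilityMeasure μ]
  {m : ℕ} (draw : ℕ → Ω → Fin m)

/-- Independence of the draw at round `a` from the draws in `[a+1, a+1+n)`. -/
lemma indep_head (hmeas : ∀ r, Measurable (draw r))
    (hindep : iIndepFun draw μ)
    (a n : ℕ) (c : Fin m) (T : Finset (Fin m)) :
    μ ({ω | draw a ω = c} ∩ {ω | ∀ i ∈ T, ∃ r ∈ Finset.Ico (a+1) (a+1+n), draw r ω = i})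
      = μ {ω | draw a ω = c}
        * μ {ω | ∀ i ∈ T, ∃ r ∈ Finset.Ico (a+1) (a+1+n), draw r ω = i} := by
  have hdisj : Disjoint ({a} : Finset ℕ) (Finset.Ico (a+1) (a+1+n)) := by
    simp [Finset.disjoint_left]
  have h := hindep.indepFun_finset {a} (Finset.Ico (a+1) (a+1+n)) hdisj hmeas
  have key := h.measure_inter_preimage_eq_mul
    (s := {x : (({a} : Finset ℕ) : Type) → Fin m | x ⟨a, Finset.mem_singleton_self a⟩ = c})
    (t := {y : (Finset.Ico (a+1) (a+1+n) : Finset ℕ) → Fin m | ∀ i ∈ T, ∃ r, y r = i})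
    (Set.toFinite _).measurableSet (Set.toFinite _).measurableSet
  have e1 : (fun ω (i : (({a} : Finset ℕ) : Type)) => draw i ω) ⁻¹'
      {x | x ⟨a, Finset.mem_singleton_self a⟩ = c} = {ω | draw a ω = c} := rfl
  have e2 : (fun ω (i : (Finset.Ico (a+1) (a+1+n) : Finset ℕ)) => draw i ω) ⁻¹'
      {y | ∀ i ∈ T, ∃ r, y r = i}
      = {ω | ∀ i ∈ T, ∃ r ∈ Finset.Ico (a+1) (a+1+n), draw r ω = i} := by
    ext ω
    simp only [Set.mem_preimage, Set.mem_setOf_eq]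
    constructor
    · intro h i hi; obtain ⟨r, hr⟩ := h i hi; exact ⟨r.1, r.2, hr⟩
    · intro h i hi; obtain ⟨r, hr, h'⟩ := h i hi; exact ⟨⟨r, hr⟩, h'⟩
  rw [e1, e2] at key
  exact key

lemma hit_meas (hmeas : ∀ r, Measurable (draw r)) (a n : ℕ) (T : Finset (Fin m)) :
    MeasurableSet {ω | ∀ i ∈ T, ∃ r ∈ Finset.Ico a (a+n), draw r ω = i} := by
  have : {ω | ∀ i ∈ T, ∃ r ∈ Finset.Ico a (a+n), draw r ω = i}
      = ⋂ i ∈ (T : Set (Fin m)), ⋃ r ∈ ((Finset.Ico a (a+n)) : Set ℕ), draw r ⁻¹' {i} := by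
    ext ω; simp
  rw [this]
  exact MeasurableSet.biInter T.countable_toSet fun i _ =>
    MeasurableSet.biUnion (Finset.Ico a (a+n)).countable_toSet
      (fun r _ => hmeas r (measurableSet_singleton i))

/-- Main induction: probability all coupons of `T` are hit within `n` rounds. -/
lemma hit_bound (hm : 1 < m) (hmeas : ∀ r, Measurable (draw r))
    (hindep : iIndepFun draw μ)
    (hunif : ∀ (r : ℕ) (c : Fin m), μ {ω | draw r ω = c} = (m : ENNReal)⁻¹) :
    ∀ (n a : ℕ) (T : Finset (Fin m)),
    μ {ω | ∀ i ∈ T, ∃ r ∈ Finset.Ico a (a+n), draw r ω = i}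
      ≤ ENNReal.ofReal ((1 - (1 - 1/(m:ℝ))^n)^T.card) := by
  have hm0 : (0:ℝ) < m := by positivity
  have hβ0 : (0:ℝ) ≤ 1 - 1/(m:ℝ) := by
    rw [sub_nonneg, div_le_one hm0]; exact_mod_cast hm.le
  have hβ1 : 1 - 1/(m:ℝ) ≤ 1 := by
    have : (0:ℝ) < 1/(m:ℝ) := by positivity
    linarith
  intro n
  induction n with
  | zero =>
    intro a T
    rcases T.eq_empty_or_nonempty with rfl | ⟨i, hi⟩
    · simp
    · have : {ω : Ω | ∀ i ∈ T, ∃ r ∈ Finset.Ico a (a+0), draw r ω = i} = ∅ := by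
        ext ω; simp only [Set.mem_setOf_eq, Set.mem_empty_iff_false, iff_false]
        intro h; obtain ⟨r, hr, -⟩ := h i hi; simp at hr
      rw [this]; simp
  | succ n ih =>
    intro a T
    rcases T.eq_empty_or_nonempty with rfl | hT
    · simp only [Finset.card_empty, pow_zero, ENNReal.ofReal_one]
      calc μ _ ≤ μ Set.univ := measure_mono (Set.subset_univ _)
        _ = 1 := measure_univ
    set u : ℝ := 1 - (1 - 1/(m:ℝ))^n with hu_def
    have hu0 : 0 ≤ u := by
      have := pow_le_one₀ hβ0 hβ1 (n := n); simpa [hu_def] using this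
    have hu1 : u ≤ 1 := by
      have := pow_nonneg hβ0 n; simp only [hu_def]; linarith
    obtain ⟨s, hs⟩ : ∃ s, T.card = s + 1 :=
      ⟨T.card - 1, (Nat.succ_pred_eq_of_pos (Finset.card_pos.mpr hT)).symm⟩
    -- decomposition
    have hdecomp : {ω : Ω | ∀ i ∈ T, ∃ r ∈ Finset.Ico a (a+(n+1)), draw r ω = i}
        ⊆ ⋃ c : Fin m, ({ω | draw a ω = c}
            ∩ {ω | ∀ i ∈ T.erase c, ∃ r ∈ Finset.Ico (a+1) (a+1+n), draw r ω = i}) := by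
      intro ω hω
      refine Set.mem_iUnion.mpr ⟨draw a ω, rfl, ?_⟩
      intro i hi
      obtain ⟨r, hr, hdr⟩ := hω i (Finset.mem_of_mem_erase hi)
      have hne : i ≠ draw a ω := Finset.ne_of_mem_erase hi
      have hra : r ≠ a := by rintro rfl; exact hne hdr.symm
      simp only [Finset.mem_Ico] at hr ⊢
      exact ⟨r, ⟨by omega, by omega⟩, hdr⟩
    -- bound each term
    have hterm : ∀ c : Fin m,
        μ ({ω | draw a ω = c}
            ∩ {ω | ∀ i ∈ T.erase c, ∃ r ∈ Finset.Ico (a+1) (a+1+n), draw r ω = i})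
          ≤ ENNReal.ofReal ((1/(m:ℝ)) * u ^ (T.erase c).card) := by
      intro c
      rw [indep_head μ draw hmeas hindep, hunif]
      have h2 := ih (a+1) (T.erase c)
      calc (m : ENNReal)⁻¹ * μ {ω | ∀ i ∈ T.erase c, ∃ r ∈ Finset.Ico (a+1) (a+1+n), draw r ω = i}
          ≤ (m : ENNReal)⁻¹ * ENNReal.ofReal (u ^ (T.erase c).card) := by
            exact mul_le_mul_right h2 _
        _ = ENNReal.ofReal ((1/(m:ℝ)) * u ^ (T.erase c).card) := by
            rw [ENNReal.ofReal_mul (by positivity)]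
            congr 1
            rw [ENNReal.ofReal_div_of_pos hm0, ENNReal.ofReal_one, ENNReal.ofReal_natCast,
              one_div]
    calc μ {ω : Ω | ∀ i ∈ T, ∃ r ∈ Finset.Ico a (a+(n+1)), draw r ω = i}
        ≤ ∑ c : Fin m, μ ({ω | draw a ω = c}
            ∩ {ω | ∀ i ∈ T.erase c, ∃ r ∈ Finset.Ico (a+1) (a+1+n), draw r ω = i}) :=
          le_trans (measure_mono hdecomp) (measure_iUnion_fintype_le μ _)
      _ ≤ ∑ c : Fin m, ENNReal.ofReal ((1/(m:ℝ)) * u ^ (T.erase c).card) :=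
          Finset.sum_le_sum fun c _ => hterm c
      _ = ENNReal.ofReal (∑ c : Fin m, (1/(m:ℝ)) * u ^ (T.erase c).card) :=
          (ENNReal.ofReal_sum_of_nonneg fun c _ => by positivity).symm
      _ ≤ ENNReal.ofReal ((1 - (1 - 1/(m:ℝ))^(n+1))^T.card) := by
          apply ENNReal.ofReal_le_ofReal
          have hsplit : ∑ c : Fin m, (1/(m:ℝ)) * u ^ (T.erase c).card
              = ∑ c ∈ T, (1/(m:ℝ)) * u ^ s + ∑ c ∈ (Finset.univ \ T), (1/(m:ℝ)) * u ^ (s+1) := by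
            rw [← Finset.sum_sdiff (Finset.subset_univ T), add_comm]
            congr 1
            · apply Finset.sum_congr rfl
              intro c hc
              rw [Finset.card_erase_of_mem hc, hs]
              simp
            · apply Finset.sum_congr rfl
              intro c hc
              rw [Finset.erase_eq_of_notMem (by simpa using (Finset.mem_sdiff.mp hc).2), hs]
          have hTm' : T.card ≤ m := by simpa using Finset.card_le_univ T
          have hcardsd : (Finset.univ \ T).card = m - T.card := by
            rw [Finset.card_sdiff_of_subset (Finset.subset_univ T), Finset.card_univ, Fintype.card_fin]
          set d : ℝ := (1 - 1/(m:ℝ))^n / m with hd_def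
          have hd0 : 0 ≤ d := by positivity
          have key : 1 - (1 - 1/(m:ℝ))^(n+1) = u + d := by
            rw [hu_def, hd_def, pow_succ]; field_simp; ring
          rw [hsplit, Finset.sum_const, Finset.sum_const, hcardsd, key, hs,
            nsmul_eq_mul, nsmul_eq_mul]
          have hcast : ((m - (s+1) : ℕ) : ℝ) = (m:ℝ) - ((s:ℝ)+1) := by
            have : s + 1 ≤ m := hs ▸ hTm'
            push_cast [Nat.cast_sub this]; ring
          rw [hcast]
          push_cast
          have hb := bern_aux u d hu0 hd0 s
          have h1u : 1 - u = (1 - 1/(m:ℝ))^n := by rw [hu_def]; ring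
          have hexp : ((s:ℝ)+1) * (1/(m:ℝ) * u ^ s) + ((m:ℝ) - ((s:ℝ)+1)) * (1/(m:ℝ) * u^(s+1))
              ≤ u ^ (s+1) + ((s:ℝ)+1) * u ^ s * d := by
            have heq : ((s:ℝ)+1) * (1/(m:ℝ) * u ^ s) + ((m:ℝ) - ((s:ℝ)+1)) * (1/(m:ℝ) * u^(s+1))
                = u^(s+1) + ((s:ℝ)+1) * u^s * ((1-u)/m) := by
              field_simp; ring
            rw [heq, h1u, ← hd_def]
          calc ((s:ℝ)+1) * (1/(m:ℝ) * u ^ s) + ((m:ℝ) - ((s:ℝ)+1)) * (1/(m:ℝ) * u^(s+1))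
              ≤ u ^ (s+1) + ((s:ℝ)+1) * u ^ s * d := hexp
            _ ≤ (u + d) ^ (s+1) := hb

end Main

section Main2
open Filter
variable {Ω : Type*} [MeasurableSpace Ω] (μ : Measure Ω) [IsProbabilityMeasure μ]
  {m : ℕ} (draw : ℕ → Ω → Fin m)

lemma never_null (hm : 1 < m) (hmeas : ∀ r, Measurable (draw r))
    (hindep : iIndepFun draw μ)
    (hunif : ∀ (r : ℕ) (c : Fin m), μ {ω | draw r ω = c} = (m : ENNReal)⁻¹)
    (i : Fin m) : μ {ω | ∀ r, draw r ω ≠ i} = 0 := by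
  have hm0 : (0:ℝ) < m := by positivity
  have hβ0 : (0:ℝ) ≤ 1 - 1/(m:ℝ) := by
    rw [sub_nonneg, div_le_one hm0]; exact_mod_cast hm.le
  have hβ1 : 1 - 1/(m:ℝ) < 1 := by
    have : (0:ℝ) < 1/(m:ℝ) := by positivity
    linarith
  have hx : (1 : ENNReal) - (m:ENNReal)⁻¹ = ENNReal.ofReal (1 - 1/(m:ℝ)) := by
    rw [ENNReal.ofReal_sub _ (by positivity), ENNReal.ofReal_one,
      ENNReal.ofReal_div_of_pos hm0, ENNReal.ofReal_one, ENNReal.ofReal_natCast, one_div]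
  have hk : ∀ k : ℕ, μ {ω | ∀ r, draw r ω ≠ i} ≤ ENNReal.ofReal ((1 - 1/(m:ℝ))^k) := by
    intro k
    have hsub : {ω | ∀ r, draw r ω ≠ i} ⊆ ⋂ r ∈ Finset.range k, draw r ⁻¹' ({i}ᶜ : Set (Fin m)) := by
      intro ω hω
      simp only [Set.mem_iInter, Set.mem_preimage, Set.mem_compl_iff, Set.mem_singleton_iff]
      exact fun r _ => hω r
    have hprod := hindep.measure_inter_preimage_eq_mul (S := Finset.range k)
      (sets := fun _ => ({i}ᶜ : Set (Fin m))) (fun r _ => (measurableSet_singleton i).compl)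
    have hone : ∀ r : ℕ, μ (draw r ⁻¹' ({i}ᶜ : Set (Fin m))) = 1 - (m:ENNReal)⁻¹ := by
      intro r
      have hpre : draw r ⁻¹' {i} = {ω | draw r ω = i} := by ext ω; simp
      rw [Set.preimage_compl, measure_compl (hmeas r (measurableSet_singleton i))
        (measure_ne_top μ _), measure_univ, hpre, hunif]
    calc μ {ω | ∀ r, draw r ω ≠ i}
        ≤ μ (⋂ r ∈ Finset.range k, draw r ⁻¹' ({i}ᶜ : Set (Fin m))) := measure_mono hsub
      _ = ∏ r ∈ Finset.range k, μ (draw r ⁻¹' ({i}ᶜ : Set (Fin m))) := hprod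
      _ = (1 - (m:ENNReal)⁻¹)^k := by
          rw [Finset.prod_congr rfl (fun r _ => hone r), Finset.prod_const, Finset.card_range]
      _ = ENNReal.ofReal ((1 - 1/(m:ℝ))^k) := by
          rw [hx, ← ENNReal.ofReal_pow hβ0]
  have htendR : Tendsto (fun k : ℕ => (1 - 1/(m:ℝ))^k) atTop (nhds 0) :=
    tendsto_pow_atTop_nhds_zero_of_lt_one hβ0 hβ1
  have htend : Tendsto (fun k : ℕ => ENNReal.ofReal ((1 - 1/(m:ℝ))^k)) atTop (nhds 0) := by
    have := (ENNReal.continuous_ofReal.tendsto 0).comp htendR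
    simpa [Function.comp_def] using this
  exact le_antisymm (ge_of_tendsto' htend hk) (zero_le)

end Main2

open MeasureTheory ProbabilityTheory in
/-- Coupon-collector tail bound: with `m` coupon types drawn uniformly and independently each
round, if `X` is the number of rounds needed to collect the `m₀` types in a specified set `S`
of uncollected types, then for every `ε > 0`,
`P(X < (1-ε)(m-1)·ln m) ≤ exp (-m^(-1+ε)·m₀)`. -/
theorem stmt_4 {Ω : Type*} [MeasurableSpace Ω] (μ : Measure Ω) [IsProbabilityMeasure μ]
    (m m₀ : ℕ) (hm : 1 < m) (hm₀ : 0 < m₀) (hm₀m : m₀ ≤ m)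
    (draw : ℕ → Ω → Fin m) (hmeas : ∀ r, Measurable (draw r))
    (hindep : iIndepFun draw μ)
    (hunif : ∀ (r : ℕ) (c : Fin m), μ {ω | draw r ω = c} = (m : ENNReal)⁻¹)
    (S : Finset (Fin m)) (hS : S.card = m₀)
    (X : Ω → ℕ) (hX : ∀ ω, X ω = sInf {t | ∀ i ∈ S, ∃ r < t, draw r ω = i})
    (ε : ℝ) (hε : 0 < ε) :
    μ {ω | (X ω : ℝ) < (1 - ε) * ((m : ℝ) - 1) * Real.log m}
      ≤ ENNReal.ofReal (Real.exp (-(m : ℝ) ^ (-1 + ε) * m₀)) := by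
  classical
  set c : ℝ := (1 - ε) * ((m : ℝ) - 1) * Real.log m with hc_def
  by_cases hc : c ≤ 0
  · have hempty : {ω : Ω | (X ω : ℝ) < c} = ∅ :=
      Set.eq_empty_iff_forall_notMem.mpr fun ω h =>
        absurd h (not_lt.mpr (le_trans hc (Nat.cast_nonneg _)))
    rw [hempty, measure_empty]
    exact zero_le
  push_neg at hc
  set n : ℕ := ⌈c⌉₊ - 1 with hn_def
  have hceil : 1 ≤ ⌈c⌉₊ := Nat.one_le_ceil_iff.mpr hc
  have hnlt : (n : ℝ) < c := by
    have h1 : (⌈c⌉₊ : ℝ) < c + 1 := Nat.ceil_lt_add_one hc.le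
    have h2 : (n:ℝ) = (⌈c⌉₊ : ℝ) - 1 := by
      rw [hn_def]; push_cast [Nat.cast_sub hceil]; ring
    linarith
  -- inclusion of the event
  have hincl : {ω : Ω | (X ω : ℝ) < c} ⊆
      {ω | ∀ i ∈ S, ∃ r ∈ Finset.Ico 0 (0+n), draw r ω = i}
        ∪ ⋃ i ∈ (S : Set (Fin m)), {ω | ∀ r, draw r ω ≠ i} := by
    intro ω hω
    simp only [Set.mem_setOf_eq] at hω
    by_cases hne : {t | ∀ i ∈ S, ∃ r < t, draw r ω = i}.Nonempty
    · left
      have hXm : X ω ∈ {t | ∀ i ∈ S, ∃ r < t, draw r ω = i} := hX ω ▸ Nat.sInf_mem hne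
      have hXn : X ω ≤ n := by
        have : X ω < ⌈c⌉₊ := Nat.lt_ceil.mpr hω
        omega
      intro i hi
      obtain ⟨r, hr, h'⟩ := hXm i hi
      exact ⟨r, Finset.mem_Ico.mpr ⟨Nat.zero_le r, by omega⟩, h'⟩
    · right
      rw [Set.not_nonempty_iff_eq_empty] at hne
      by_contra hcon
      simp only [Set.mem_iUnion, Set.mem_setOf_eq] at hcon
      push_neg at hcon
      set F : Fin m → ℕ := fun i => if h : ∃ r, draw r ω = i then Nat.find h else 0 with hF
      have ht : (Finset.univ.sup F + 1) ∈ {t | ∀ i ∈ S, ∃ r < t, draw r ω = i} := by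
        intro i hi
        have h := hcon i hi
        refine ⟨Nat.find h, ?_, Nat.find_spec h⟩
        have hFi : F i = Nat.find h := dif_pos h
        have hle : F i ≤ Finset.univ.sup F := Finset.le_sup (Finset.mem_univ i)
        omega
      rw [hne] at ht
      exact absurd ht (Set.notMem_empty _)
  -- measure bound
  have hnull : μ (⋃ i ∈ (S : Set (Fin m)), {ω : Ω | ∀ r, draw r ω ≠ i}) = 0 :=
    (measure_biUnion_null_iff S.countable_toSet).mpr
      fun i _ => never_null μ draw hm hmeas hindep hunif i
  have hmain := hit_bound μ draw hm hmeas hindep hunif n 0 S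
  -- real-number estimates
  have hm1 : (1:ℝ) < m := by exact_mod_cast hm
  have hmpos : (0:ℝ) < m := by linarith
  have hm1' : (0:ℝ) < (m:ℝ) - 1 := by linarith
  have hlogm : 0 < Real.log m := Real.log_pos hm1
  have hβpos : (0:ℝ) < 1 - 1/(m:ℝ) := by
    rw [sub_pos, div_lt_one hmpos]; exact hm1
  have hβ1 : 1 - 1/(m:ℝ) ≤ 1 := by
    have : (0:ℝ) < 1/(m:ℝ) := by positivity
    linarith
  -- log bound
  have hβlog : -(1/((m:ℝ)-1)) ≤ Real.log (1 - 1/(m:ℝ)) := by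
    have h1 : Real.log ((m:ℝ)/((m:ℝ)-1)) ≤ (m:ℝ)/((m:ℝ)-1) - 1 :=
      Real.log_le_sub_one_of_pos (by positivity)
    have h2 : (m:ℝ)/((m:ℝ)-1) - 1 = 1/((m:ℝ)-1) := by field_simp; ring
    have h3 : Real.log ((m:ℝ)/((m:ℝ)-1)) = Real.log m - Real.log ((m:ℝ)-1) :=
      Real.log_div (ne_of_gt hmpos) (ne_of_gt hm1')
    have h4 : (1:ℝ) - 1/(m:ℝ) = ((m:ℝ)-1)/(m:ℝ) := by field_simp
    have h5 : Real.log (1 - 1/(m:ℝ)) = Real.log ((m:ℝ)-1) - Real.log m := by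
      rw [h4, Real.log_div (ne_of_gt hm1') (ne_of_gt hmpos)]
    linarith
  have hq : (m:ℝ) ^ (-1+ε) ≤ (1 - 1/(m:ℝ))^n := by
    have e1 : (m:ℝ) ^ (-1+ε) = Real.exp ((-1+ε) * Real.log m) := by
      rw [Real.rpow_def_of_pos hmpos, mul_comm]
    have e2 : (1 - 1/(m:ℝ))^n = Real.exp ((n:ℝ) * Real.log (1 - 1/(m:ℝ))) := by
      rw [Real.exp_nat_mul, Real.exp_log hβpos]
    rw [e1, e2]
    apply Real.exp_le_exp.mpr
    have h6 : (n:ℝ) * (-(1/((m:ℝ)-1))) ≤ (n:ℝ) * Real.log (1 - 1/(m:ℝ)) :=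
      mul_le_mul_of_nonneg_left hβlog (Nat.cast_nonneg n)
    have h7 : (n:ℝ) * (-(1/((m:ℝ)-1))) = -(n:ℝ)/((m:ℝ)-1) := by ring
    have h8 : (-1+ε) * Real.log m = -c/((m:ℝ)-1) := by
      rw [hc_def]; field_simp; ring
    have h9 : -c/((m:ℝ)-1) ≤ -(n:ℝ)/((m:ℝ)-1) :=
      (div_le_div_iff_of_pos_right hm1').mpr (by linarith)
    linarith
  have hβn1 : (1 - 1/(m:ℝ))^n ≤ 1 := pow_le_one₀ hβpos.le hβ1
  have h0 : (0:ℝ) ≤ 1 - (1 - 1/(m:ℝ))^n := by linarith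
  have h10 : 1 - (1 - 1/(m:ℝ))^n ≤ 1 - (m:ℝ)^(-1+ε) := by linarith
  have h11 : 1 - (m:ℝ)^(-1+ε) ≤ Real.exp (-(m:ℝ)^(-1+ε)) := by
    linarith [Real.add_one_le_exp (-(m:ℝ)^(-1+ε))]
  have hreal : (1 - (1 - 1/(m:ℝ))^n)^m₀ ≤ Real.exp (-(m:ℝ)^(-1+ε) * m₀) := by
    calc (1 - (1 - 1/(m:ℝ))^n)^m₀
        ≤ (Real.exp (-(m:ℝ)^(-1+ε)))^m₀ :=
          pow_le_pow_left₀ h0 (le_trans h10 h11) m₀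
      _ = Real.exp (-(m:ℝ)^(-1+ε) * m₀) := by
          rw [← Real.exp_nat_mul]; ring_nf
  calc μ {ω : Ω | (X ω : ℝ) < c}
      ≤ μ ({ω | ∀ i ∈ S, ∃ r ∈ Finset.Ico 0 (0+n), draw r ω = i}
          ∪ ⋃ i ∈ (S : Set (Fin m)), {ω : Ω | ∀ r, draw r ω ≠ i}) := measure_mono hincl
    _ ≤ μ {ω | ∀ i ∈ S, ∃ r ∈ Finset.Ico 0 (0+n), draw r ω = i}
          + μ (⋃ i ∈ (S : Set (Fin m)), {ω : Ω | ∀ r, draw r ω ≠ i}) := measure_union_le _ _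
    _ = μ {ω | ∀ i ∈ S, ∃ r ∈ Finset.Ico 0 (0+n), draw r ω = i} := by rw [hnull, add_zero]
    _ ≤ ENNReal.ofReal ((1 - (1 - 1/(m:ℝ))^n)^S.card) := hmain
    _ ≤ ENNReal.ofReal (Real.exp (-(m:ℝ)^(-1+ε) * m₀)) := by
        rw [hS]; exact ENNReal.ofReal_le_ofReal hreal
end

section
/- Let X₁, ..., X_{m₀} be indicator random variables where X_i = 1 iff coupon type i appears within the first T rounds of the coupon-collector process with m types. Then for any set I ⊆ {1,...,m₀} and j ∉ I, P(X_i = 1 for all i ∈ I and X_j = 1) ≤ P(X_i = 1 for all i ∈ I) · P(X_j = 1). -/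
open MeasureTheory ProbabilityTheory Finset in
/-- Injection step: `|A| * |C| ≤ m^T * |A ∩ C|` where `C` = functions avoiding `j`. -/
lemma coupon_inj (m T : ℕ) (j : Fin m) (I : Finset (Fin m)) (hj : j ∉ I) :
    (univ.filter (fun f : Fin T → Fin m => ∀ i ∈ I, ∃ r, f r = i)).card *
      (univ.filter (fun f : Fin T → Fin m => ∀ r, f r ≠ j)).card
    ≤ m ^ T *
      (univ.filter (fun f : Fin T → Fin m =>
        (∀ i ∈ I, ∃ r, f r = i) ∧ ∀ r, f r ≠ j)).card := by
  classical
  have hcard : ((univ : Finset (Fin T → Fin m))).card = m ^ T := by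
    simp [Fintype.card_fun]
  calc (univ.filter (fun f : Fin T → Fin m => ∀ i ∈ I, ∃ r, f r = i)).card *
      (univ.filter (fun f : Fin T → Fin m => ∀ r, f r ≠ j)).card
      = ((univ.filter (fun f : Fin T → Fin m => ∀ i ∈ I, ∃ r, f r = i)) ×ˢ
        (univ.filter (fun f : Fin T → Fin m => ∀ r, f r ≠ j))).card := (card_product _ _).symm
    _ ≤ ((univ : Finset (Fin T → Fin m)) ×ˢ
        (univ.filter (fun f : Fin T → Fin m =>
          (∀ i ∈ I, ∃ r, f r = i) ∧ ∀ r, f r ≠ j))).card := by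
        apply Finset.card_le_card_of_injOn
          (fun p => (fun r => if p.1 r = j then j else p.2 r,
                     fun r => if p.1 r = j then p.2 r else p.1 r))
        · rintro ⟨f, c⟩ hp
          simp only [coe_product, Set.mem_prod, mem_coe, mem_product, mem_filter, mem_univ, true_and] at hp ⊢
          obtain ⟨hA, hC⟩ := hp
          refine ⟨fun i hi => ?_, fun r => ?_⟩
          · obtain ⟨r, hr⟩ := hA i hi
            refine ⟨r, ?_⟩
            have hij : f r ≠ j := by rw [hr]; rintro rfl; exact hj hi
            rw [if_neg hij]; exact hr
          · by_cases h : f r = j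
            · rw [if_pos h]; exact hC r
            · rw [if_neg h]; exact h
        · rintro ⟨f₁, c₁⟩ hp₁ ⟨f₂, c₂⟩ hp₂ heq
          simp only [coe_product, Set.mem_prod, mem_coe, mem_filter, mem_univ, true_and] at hp₁ hp₂
          obtain ⟨-, hC₁⟩ := hp₁
          obtain ⟨-, hC₂⟩ := hp₂
          have h1 := congrFun (congrArg Prod.fst heq)
          have h2 := congrFun (congrArg Prod.snd heq)
          simp only at h1 h2
          have key : ∀ r, f₁ r = f₂ r ∧ c₁ r = c₂ r := by
            intro r
            have e1 := h1 r
            have e2 := h2 r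
            by_cases a1 : f₁ r = j <;> by_cases a2 : f₂ r = j
            · simp [a1, a2] at e1 e2; exact ⟨a1.trans a2.symm, e2⟩
            · simp [a1, a2] at e1 e2; exact absurd e1.symm (hC₂ r)
            · simp [a1, a2] at e1 e2; exact absurd e1 (hC₁ r)
            · simp [a1, a2] at e1 e2; exact ⟨e2, e1⟩
          exact Prod.ext (funext fun r => (key r).1) (funext fun r => (key r).2)
    _ = m ^ T * (univ.filter (fun f : Fin T → Fin m =>
          (∀ i ∈ I, ∃ r, f r = i) ∧ ∀ r, f r ≠ j)).card := by
        rw [card_product, hcard]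

open Finset in
/-- The key counting inequality for negative correlation. -/
lemma coupon_count (m T : ℕ) (j : Fin m) (I : Finset (Fin m)) (hj : j ∉ I) :
    (univ.filter (fun f : Fin T → Fin m =>
      (∀ i ∈ I, ∃ r, f r = i) ∧ ∃ r, f r = j)).card * m ^ T
    ≤ (univ.filter (fun f : Fin T → Fin m => ∀ i ∈ I, ∃ r, f r = i)).card *
      (univ.filter (fun f : Fin T → Fin m => ∃ r, f r = j)).card := by
  classical
  set A := univ.filter (fun f : Fin T → Fin m => ∀ i ∈ I, ∃ r, f r = i) with hA
  set U := m ^ T with hU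
  have hcard : ((univ : Finset (Fin T → Fin m))).card = U := by
    simp [Fintype.card_fun, hU]
  have hsplitB : (univ.filter (fun f : Fin T → Fin m => ∃ r, f r = j)).card
      + (univ.filter (fun f : Fin T → Fin m => ∀ r, f r ≠ j)).card = U := by
    rw [← hcard]
    have := Finset.card_filter_add_card_filter_not
      (s := (univ : Finset (Fin T → Fin m))) (p := fun f => ∃ r, f r = j)
    simpa [not_exists] using this
  have hsplitA : (univ.filter (fun f : Fin T → Fin m =>
        (∀ i ∈ I, ∃ r, f r = i) ∧ ∃ r, f r = j)).card
      + (univ.filter (fun f : Fin T → Fin m =>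
        (∀ i ∈ I, ∃ r, f r = i) ∧ ∀ r, f r ≠ j)).card = A.card := by
    have := Finset.card_filter_add_card_filter_not
      (s := A) (p := fun f => ∃ r, f r = j)
    rw [hA] at this ⊢
    simpa [Finset.filter_filter, not_exists, and_comm] using this
  set cAB := (univ.filter (fun f : Fin T → Fin m =>
      (∀ i ∈ I, ∃ r, f r = i) ∧ ∃ r, f r = j)).card
  set cAC := (univ.filter (fun f : Fin T → Fin m =>
      (∀ i ∈ I, ∃ r, f r = i) ∧ ∀ r, f r ≠ j)).card
  set cB := (univ.filter (fun f : Fin T → Fin m => ∃ r, f r = j)).card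
  set cC := (univ.filter (fun f : Fin T → Fin m => ∀ r, f r ≠ j)).card
  have hinj : A.card * cC ≤ U * cAC := coupon_inj m T j I hj
  have h1 : cAB = A.card - cAC := Nat.eq_sub_of_add_eq hsplitA
  have h2 : cB = U - cC := Nat.eq_sub_of_add_eq hsplitB
  calc cAB * U = A.card * U - cAC * U := by rw [h1, Nat.sub_mul]
    _ ≤ A.card * U - A.card * cC := by
        apply Nat.sub_le_sub_left
        calc A.card * cC ≤ U * cAC := hinj
          _ ≤ cAC * U := by rw [Nat.mul_comm]
    _ = A.card * (U - cC) := (Nat.mul_sub _ _ _).symm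
    _ = A.card * cB := by rw [h2]

open MeasureTheory ProbabilityTheory Finset in
lemma atom_meas {Ω : Type*} [MeasurableSpace Ω] (μ : Measure Ω) [IsProbabilityMeasure μ]
    (m : ℕ) (hm : 0 < m) (draw : ℕ → Ω → Fin m)
    (hindep : iIndepFun draw μ)
    (hunif : ∀ (r : ℕ) (c : Fin m), μ {ω | draw r ω = c} = (m : ENNReal)⁻¹)
    (T : ℕ) (f : Fin T → Fin m) :
    μ {ω | ∀ r : Fin T, draw r ω = f r} = (m : ENNReal)⁻¹ ^ T := by
  classical
  set f' : ℕ → Fin m := fun n => if h : n < T then f ⟨n, h⟩ else ⟨0, hm⟩ with hf'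
  have hset : {ω | ∀ r : Fin T, draw r ω = f r}
      = ⋂ n ∈ Finset.range T, (draw n) ⁻¹' {f' n} := by
    ext ω
    simp only [Set.mem_setOf_eq, Set.mem_iInter, Finset.mem_range, Set.mem_preimage,
      Set.mem_singleton_iff]
    constructor
    · intro h n hn
      simpa [hf', hn] using h ⟨n, hn⟩
    · intro h r
      have := h r r.isLt
      simpa [hf', r.isLt] using this
  rw [hset, hindep.meas_biInter (fun n _ => ⟨{f' n}, MeasurableSet.singleton _, rfl⟩)]
  have : ∀ n, (draw n) ⁻¹' {f' n} = {ω | draw n ω = f' n} := fun n => rfl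
  simp only [this, hunif]
  rw [Finset.prod_const, Finset.card_range]

open MeasureTheory ProbabilityTheory Finset in
lemma event_meas {Ω : Type*} [MeasurableSpace Ω] (μ : Measure Ω) [IsProbabilityMeasure μ]
    (m : ℕ) (hm : 0 < m) (draw : ℕ → Ω → Fin m) (hmeas : ∀ r, Measurable (draw r))
    (hindep : iIndepFun draw μ)
    (hunif : ∀ (r : ℕ) (c : Fin m), μ {ω | draw r ω = c} = (m : ENNReal)⁻¹)
    (T : ℕ) (P : (Fin T → Fin m) → Prop) [DecidablePred P] :
    μ {ω | P (fun r => draw r ω)}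
      = (univ.filter P).card * (m : ENNReal)⁻¹ ^ T := by
  classical
  have hset : {ω | P (fun r => draw r ω)}
      = ⋃ f ∈ univ.filter P, {ω | ∀ r : Fin T, draw r ω = f r} := by
    ext ω
    simp only [Set.mem_setOf_eq, Set.mem_iUnion, Finset.mem_filter, Finset.mem_univ, true_and]
    constructor
    · intro h
      exact ⟨fun r => draw r ω, h, fun r => rfl⟩
    · rintro ⟨f, hf, hfe⟩
      have : (fun r : Fin T => draw r ω) = f := funext hfe
      rwa [this]
  rw [hset, measure_biUnion_finset]
  · rw [Finset.sum_congr rfl fun f _ => atom_meas μ m hm draw hindep hunif T f]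
    rw [Finset.sum_const, nsmul_eq_mul]
  · intro f hf g hg hne
    rw [Function.onFun, Set.disjoint_left]
    intro ω h1 h2
    exact hne (funext fun r => (h1 r).symm.trans (h2 r))
  · intro f hf
    have : {ω | ∀ r : Fin T, draw r ω = f r} = ⋂ r : Fin T, (draw r) ⁻¹' {f r} := by
      ext ω; simp [Set.mem_iInter]
    rw [this]
    exact MeasurableSet.iInter fun r => (hmeas r) (measurableSet_singleton _)

open MeasureTheory ProbabilityTheory in
/-- Negative correlation in the coupon collector process: with `m` coupon types drawn
uniformly and independently each round and `T` a fixed positive integer, for coupon types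
indexed by a set `S` of size `m₀`, any `I ⊆ S` and `j ∈ S` with `j ∉ I`, the probability that
all coupons in `I` and coupon `j` appear within the first `T` rounds is at most the product of
the probability that all coupons in `I` appear and the probability that coupon `j` appears. -/
theorem stmt_5 {Ω : Type*} [MeasurableSpace Ω] (μ : Measure Ω) [IsProbabilityMeasure μ]
    (m m₀ : ℕ) (hm : 1 < m) (hm₀ : 0 < m₀) (hm₀m : m₀ ≤ m)
    (draw : ℕ → Ω → Fin m) (hmeas : ∀ r, Measurable (draw r))
    (hindep : iIndepFun draw μ)
    (hunif : ∀ (r : ℕ) (c : Fin m), μ {ω | draw r ω = c} = (m : ENNReal)⁻¹)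
    (T : ℕ) (hT : 0 < T)
    (S : Finset (Fin m)) (hS : S.card = m₀)
    (I : Finset (Fin m)) (hI : I ⊆ S) (j : Fin m) (hjS : j ∈ S) (hj : j ∉ I) :
    μ {ω | (∀ i ∈ I, ∃ r < T, draw r ω = i) ∧ (∃ r < T, draw r ω = j)}
      ≤ μ {ω | ∀ i ∈ I, ∃ r < T, draw r ω = i} * μ {ω | ∃ r < T, draw r ω = j} := by
  classical
  have hm0 : 0 < m := Nat.lt_of_lt_of_le Nat.one_pos hm.le
  -- translate `∃ r < T` to `∃ r : Fin T`
  have hiff : ∀ (ω : Ω) (c : Fin m),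
      (∃ r < T, draw r ω = c) ↔ (∃ r : Fin T, draw r ω = c) := by
    intro ω c
    constructor
    · rintro ⟨r, hr, h⟩; exact ⟨⟨r, hr⟩, h⟩
    · rintro ⟨r, h⟩; exact ⟨r, r.isLt, h⟩
  have hE1 : {ω | (∀ i ∈ I, ∃ r < T, draw r ω = i) ∧ (∃ r < T, draw r ω = j)}
      = {ω | (fun f : Fin T → Fin m => (∀ i ∈ I, ∃ r, f r = i) ∧ ∃ r, f r = j)
          (fun r => draw r ω)} := by
    ext ω; simp only [Set.mem_setOf_eq, hiff]
  have hE2 : {ω | ∀ i ∈ I, ∃ r < T, draw r ω = i}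
      = {ω | (fun f : Fin T → Fin m => ∀ i ∈ I, ∃ r, f r = i) (fun r => draw r ω)} := by
    ext ω; simp only [Set.mem_setOf_eq, hiff]
  have hE3 : {ω | ∃ r < T, draw r ω = j}
      = {ω | (fun f : Fin T → Fin m => ∃ r, f r = j) (fun r => draw r ω)} := by
    ext ω; simp only [Set.mem_setOf_eq, hiff]
  have m1 := event_meas μ m hm0 draw hmeas hindep hunif T
    (fun f : Fin T → Fin m => (∀ i ∈ I, ∃ r, f r = i) ∧ ∃ r, f r = j)
  have m2 := event_meas μ m hm0 draw hmeas hindep hunif T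
    (fun f : Fin T → Fin m => ∀ i ∈ I, ∃ r, f r = i)
  have m3 := event_meas μ m hm0 draw hmeas hindep hunif T
    (fun f : Fin T → Fin m => ∃ r, f r = j)
  rw [hE1, hE2, hE3, m1, m2, m3]
  set q : ENNReal := (m : ENNReal)⁻¹ with hq
  set cAB := (Finset.univ.filter (fun f : Fin T → Fin m =>
      (∀ i ∈ I, ∃ r, f r = i) ∧ ∃ r, f r = j)).card
  set cA := (Finset.univ.filter (fun f : Fin T → Fin m => ∀ i ∈ I, ∃ r, f r = i)).card
  set cB := (Finset.univ.filter (fun f : Fin T → Fin m => ∃ r, f r = j)).card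
  have hcount : cAB * m ^ T ≤ cA * cB := coupon_count m T j I hj
  have hmne : (m : ENNReal) ≠ 0 := by
    exact_mod_cast Nat.cast_ne_zero.mpr hm0.ne'
  have hmtop : (m : ENNReal) ≠ ⊤ := ENNReal.natCast_ne_top m
  have hcancel : (m : ENNReal) ^ T * q ^ T = 1 := by
    rw [hq, ← mul_pow, ENNReal.mul_inv_cancel hmne hmtop, one_pow]
  calc (cAB : ENNReal) * q ^ T
      = ((cAB : ENNReal) * (m : ENNReal) ^ T) * (q ^ T * q ^ T) := by
        rw [mul_comm (q ^ T) (q ^ T), ← mul_assoc, mul_assoc ((cAB : ENNReal)) _ _,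
          hcancel, mul_one]
    _ ≤ ((cA : ENNReal) * (cB : ENNReal)) * (q ^ T * q ^ T) := by
        apply mul_le_mul_left
        have : ((cAB * m ^ T : ℕ) : ENNReal) ≤ ((cA * cB : ℕ) : ENNReal) := by
          exact_mod_cast hcount
        push_cast at this
        exact this
    _ = ((cA : ENNReal) * q ^ T) * ((cB : ENNReal) * q ^ T) := by ring
end
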